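/- (Proposition 2, non-vanishing lower bound.) In the setting of the Proposition 2 gradient identity, suppose additionally that α_k > 0 for all k ∈ G, that Cov_{π_s}(z_k, z_j) ≥ 0 for all k ∈ G with k ≠ j, that Cov_{π_s}(r_ans, z_j) ≥ 0, and that 0 < p_j(s) < 1. Then the derivative at t = s_j of t ↦ E_{π_{s[j := t]}}[r_total] is at least α_j·p_j(s)·(1 − p_j(s)), which is strictly positive. -/

import Mathlib

open Finset

namespace LongRLVR

/-- Real-valued indicator that chunk `j` belongs to the selection `Z`. -/
noncomputable def ind {N : ℕ} (Z : Fin N → Bool) (j : Fin N) : ℝ := if Z j then 1 else 0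

/-- Expectation of `X` under the finitely supported distribution `μ` on selections. -/
noncomputable def expec {N : ℕ} (μ X : (Fin N → Bool) → ℝ) : ℝ := ∑ Z, μ Z * X Z

/-- Covariance of `X` and `Y` under `μ`. -/
noncomputable def cov {N : ℕ} (μ X Y : (Fin N → Bool) → ℝ) : ℝ :=
  expec μ (fun Z => X Z * Y Z) - expec μ X * expec μ Y

/-- Unnormalized log-linear weight `exp(∑ k, s k * z k + ψ Z)`. -/
noncomputable def wt {N : ℕ} (s : Fin N → ℝ) (ψ : (Fin N → Bool) → ℝ)
    (Z : Fin N → Bool) : ℝ :=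
  Real.exp ((∑ k, s k * ind Z k) + ψ Z)

/-- The log-linear policy `π_s` with potential `ψ`. -/
noncomputable def pol {N : ℕ} (s : Fin N → ℝ) (ψ : (Fin N → Bool) → ℝ)
    (Z : Fin N → Bool) : ℝ :=
  wt s ψ Z / ∑ Z', wt s ψ Z'

/-- Marginal selection probability `p_j(s) = E_{π_s}[z_j]`. -/
noncomputable def pmarg {N : ℕ} (s : Fin N → ℝ) (ψ : (Fin N → Bool) → ℝ) (j : Fin N) : ℝ :=
  expec (pol s ψ) (fun Z => ind Z j)

open Classical in
/-- Probability of the event `A` under `μ`. -/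
noncomputable def probEvent {N : ℕ} (μ : (Fin N → Bool) → ℝ)
    (A : (Fin N → Bool) → Prop) : ℝ :=
  ∑ Z, if A Z then μ Z else 0

open Classical in
/-- Conditional expectation `E_μ[X | A] = E_μ[X · 1_A] / μ(A)`. -/
noncomputable def condExp {N : ℕ} (μ X : (Fin N → Bool) → ℝ)
    (A : (Fin N → Bool) → Prop) : ℝ :=
  (∑ Z, if A Z then μ Z * X Z else 0) / probEvent μ A

/-- The independent Bernoulli selection model with parameters `p`. -/
noncomputable def bern {N : ℕ} (p : Fin N → ℝ) (Z : Fin N → Bool) : ℝ :=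
  ∏ k, if Z k then p k else 1 - p k

/-- Logistic sigmoid. -/
noncomputable def sigmoid (x : ℝ) : ℝ := 1 / (1 + Real.exp (-x))

/-- The subset of `Fin N` corresponding to the selection `Z`. -/
def toFin {N : ℕ} (Z : Fin N → Bool) : Finset (Fin N) :=
  Finset.univ.filter (fun k => Z k = true)


-- auxiliary lemmas
lemma expec_pol {N : ℕ} (s : Fin N → ℝ) (ψ Y : (Fin N → Bool) → ℝ) :
    expec (pol s ψ) Y = (∑ Z, wt s ψ Z * Y Z) / (∑ Z, wt s ψ Z) := by
  simp only [expec, pol]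
  rw [Finset.sum_div]
  exact Finset.sum_congr rfl fun Z _ => by ring

lemma cov_add {N : ℕ} (μ X Y W : (Fin N → Bool) → ℝ) :
    cov μ (fun Z => X Z + Y Z) W = cov μ X W + cov μ Y W := by
  simp only [cov, expec, add_mul, mul_add, Finset.sum_add_distrib]
  ring

lemma expec_sum {N : ℕ} (μ : (Fin N → Bool) → ℝ) {ι : Type*} (G : Finset ι)
    (f : ι → (Fin N → Bool) → ℝ) :
    expec μ (fun Z => ∑ k ∈ G, f k Z) = ∑ k ∈ G, expec μ (f k) := by
  simp only [expec, Finset.mul_sum]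
  exact Finset.sum_comm

lemma cov_sum {N : ℕ} (μ W : (Fin N → Bool) → ℝ) {ι : Type*} (G : Finset ι)
    (f : ι → (Fin N → Bool) → ℝ) :
    cov μ (fun Z => ∑ k ∈ G, f k Z) W = ∑ k ∈ G, cov μ (f k) W := by
  simp only [cov]
  have h1 : (fun Z => (∑ k ∈ G, f k Z) * W Z) = fun Z => ∑ k ∈ G, f k Z * W Z := by
    funext Z; rw [Finset.sum_mul]
  rw [h1, expec_sum, expec_sum, Finset.sum_mul, ← Finset.sum_sub_distrib]

lemma cov_smul {N : ℕ} (μ X W : (Fin N → Bool) → ℝ) (c : ℝ) :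
    cov μ (fun Z => c * X Z) W = c * cov μ X W := by
  have h1 : (fun Z => (c * X Z) * W Z) = fun Z => c * (X Z * W Z) := by funext Z; ring
  have h2 : ∀ Y : (Fin N → Bool) → ℝ, expec μ (fun Z => c * Y Z) = c * expec μ Y := by
    intro Y; simp only [expec, Finset.mul_sum]
    exact Finset.sum_congr rfl fun Z _ => by ring
  simp only [cov, h1, h2]
  ring

/-- Proposition 2, non-vanishing lower bound: with positive weights on `G`,
nonnegative cross-covariances, nonnegative answer covariance, and `0 < p_j(s) < 1`, the
derivative at `t = s_j` of `t ↦ E_{π_{s[j:=t]}}[r_total]` is at least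
`α_j p_j(s)(1 − p_j(s))`, which is strictly positive. -/
theorem stmt13 (N : ℕ) (s : Fin N → ℝ) (ψ : (Fin N → Bool) → ℝ) (G : Finset (Fin N))
    (α : Fin N → ℝ) (rans : (Fin N → Bool) → ℝ) (j : Fin N) (hj : j ∈ G)
    (hα : ∀ k ∈ G, 0 < α k)
    (hcovkj : ∀ k ∈ G, k ≠ j →
      0 ≤ cov (pol s ψ) (fun Z => ind Z k) (fun Z => ind Z j))
    (hcovr : 0 ≤ cov (pol s ψ) rans (fun Z => ind Z j))
    (h0 : 0 < pmarg s ψ j) (h1 : pmarg s ψ j < 1) :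
    DifferentiableAt ℝ
      (fun t : ℝ => expec (pol (Function.update s j t) ψ)
        (fun Z => rans Z + ∑ k ∈ G, α k * ind Z k)) (s j) ∧
    α j * (pmarg s ψ j * (1 - pmarg s ψ j))
      ≤ deriv (fun t : ℝ => expec (pol (Function.update s j t) ψ)
          (fun Z => rans Z + ∑ k ∈ G, α k * ind Z k)) (s j) ∧
    0 < α j * (pmarg s ψ j * (1 - pmarg s ψ j)) := by
  classical
  set X : (Fin N → Bool) → ℝ := fun Z => rans Z + ∑ k ∈ G, α k * ind Z k with hX
  -- derivative of weights
  have hw : ∀ (Z : Fin N → Bool) (t₀ : ℝ),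
      HasDerivAt (fun t => wt (Function.update s j t) ψ Z)
        (ind Z j * wt (Function.update s j t₀) ψ Z) t₀ := by
    intro Z t₀
    set D : ℝ := (∑ k ∈ Finset.univ.erase j, s k * ind Z k) + ψ Z with hD
    have key : ∀ t, wt (Function.update s j t) ψ Z = Real.exp (ind Z j * t + D) := by
      intro t
      unfold wt
      congr 1
      rw [← Finset.add_sum_erase Finset.univ (fun k => Function.update s j t k * ind Z k)
        (Finset.mem_univ j)]
      rw [Function.update_self]
      have herase : ∑ k ∈ Finset.univ.erase j, Function.update s j t k * ind Z k
          = ∑ k ∈ Finset.univ.erase j, s k * ind Z k :=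
        Finset.sum_congr rfl fun k hk => by
          rw [Function.update_of_ne (Finset.ne_of_mem_erase hk)]
      rw [herase]
      rw [hD]; ring
    have h1 : HasDerivAt (fun t : ℝ => Real.exp (ind Z j * t + D))
        (Real.exp (ind Z j * t₀ + D) * ind Z j) t₀ := by
      have := (((hasDerivAt_id t₀).const_mul (ind Z j)).add_const D).exp
      simpa using this
    simp only [key]
    convert h1 using 1
    ring
  have hBpos : ∀ t : ℝ, 0 < ∑ Z, wt (Function.update s j t) ψ Z := fun t =>
    Finset.sum_pos (fun Z _ => Real.exp_pos _) Finset.univ_nonempty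
  have hA : HasDerivAt (fun t => ∑ Z, wt (Function.update s j t) ψ Z * X Z)
      (∑ Z, ind Z j * wt s ψ Z * X Z) (s j) := by
    have := HasDerivAt.fun_sum (fun Z (_ : Z ∈ Finset.univ) => (hw Z (s j)).mul_const (X Z))
    simpa [Function.update_eq_self] using this
  have hB : HasDerivAt (fun t => ∑ Z, wt (Function.update s j t) ψ Z)
      (∑ Z, ind Z j * wt s ψ Z) (s j) := by
    have := HasDerivAt.fun_sum (fun Z (_ : Z ∈ Finset.univ) => hw Z (s j))
    simpa [Function.update_eq_self] using this
  have hBne : (∑ Z, wt (Function.update s j (s j)) ψ Z) ≠ 0 := ne_of_gt (hBpos _)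
  have hdiv := hA.div hB hBne
  simp only [Function.update_eq_self] at hdiv hBne
  have hfun : (fun t : ℝ => expec (pol (Function.update s j t) ψ) X)
      = fun t => (∑ Z, wt (Function.update s j t) ψ Z * X Z) /
          (∑ Z, wt (Function.update s j t) ψ Z) := by
    funext t; exact expec_pol _ _ _
  have hval : ((∑ Z, ind Z j * wt s ψ Z * X Z) * (∑ Z, wt s ψ Z)
        - (∑ Z, wt s ψ Z * X Z) * (∑ Z, ind Z j * wt s ψ Z)) / (∑ Z, wt s ψ Z) ^ 2
      = cov (pol s ψ) X (fun Z => ind Z j) := by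
    have e1 : expec (pol s ψ) (fun Z => X Z * ind Z j)
        = (∑ Z, ind Z j * wt s ψ Z * X Z) / (∑ Z, wt s ψ Z) := by
      rw [expec_pol]; congr 1; exact Finset.sum_congr rfl fun Z _ => by ring
    have e2 : expec (pol s ψ) X = (∑ Z, wt s ψ Z * X Z) / (∑ Z, wt s ψ Z) := expec_pol _ _ _
    have e3 : expec (pol s ψ) (fun Z => ind Z j)
        = (∑ Z, ind Z j * wt s ψ Z) / (∑ Z, wt s ψ Z) := by
      rw [expec_pol]; congr 1; exact Finset.sum_congr rfl fun Z _ => by ring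
    rw [cov, e1, e2, e3]
    field_simp
  have hF : HasDerivAt (fun t : ℝ => expec (pol (Function.update s j t) ψ) X)
      (cov (pol s ψ) X (fun Z => ind Z j)) (s j) := by
    rw [hfun, ← hval]
    exact hdiv
  -- covariance decomposition
  have hvar : cov (pol s ψ) (fun Z => ind Z j) (fun Z => ind Z j)
      = pmarg s ψ j * (1 - pmarg s ψ j) := by
    have h2 : (fun Z : Fin N → Bool => ind Z j * ind Z j) = fun Z => ind Z j := by
      funext Z; unfold ind; by_cases h : Z j <;> simp [h]
    rw [cov, h2, ← pmarg]
    ring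
  have hdecomp : cov (pol s ψ) X (fun Z => ind Z j)
      = cov (pol s ψ) rans (fun Z => ind Z j)
        + ∑ k ∈ G, α k * cov (pol s ψ) (fun Z => ind Z k) (fun Z => ind Z j) := by
    rw [hX]
    rw [cov_add, cov_sum]
    congr 1
    exact Finset.sum_congr rfl fun k _ => cov_smul _ _ _ _
  have hsum : α j * (pmarg s ψ j * (1 - pmarg s ψ j))
      ≤ ∑ k ∈ G, α k * cov (pol s ψ) (fun Z => ind Z k) (fun Z => ind Z j) := by
    rw [← Finset.add_sum_erase G _ hj, hvar]
    have : 0 ≤ ∑ k ∈ G.erase j, α k * cov (pol s ψ) (fun Z => ind Z k) (fun Z => ind Z j) :=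
      Finset.sum_nonneg fun k hk => mul_nonneg (le_of_lt (hα k (Finset.mem_of_mem_erase hk)))
        (hcovkj k (Finset.mem_of_mem_erase hk) (Finset.ne_of_mem_erase hk))
    linarith
  refine ⟨hF.differentiableAt, ?_, ?_⟩
  · rw [hF.deriv, hdecomp]
    linarith
  · have := hα j hj
    have : 0 < pmarg s ψ j * (1 - pmarg s ψ j) := mul_pos h0 (by linarith)
    exact mul_pos (hα j hj) this

end LongRLVR
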